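/- For every integer k ≥ 1, the domination number of the hypercube of dimension 2^k − 1 satisfies γ(Q_{2^k−1}) = 2^{2^k − k − 1}. -/

import Mathlib

open SimpleGraph

/-- The complete graph on two vertices. -/
abbrev K2 : SimpleGraph (Fin 2) := ⊤

/-- `S` is a dominating set of `G`: every vertex not in `S` is adjacent to a vertex of `S`. -/
def IsDominatingSet {V : Type*} (G : SimpleGraph V) (S : Finset V) : Prop :=
  ∀ v : V, v ∉ S → ∃ u ∈ S, G.Adj v u

/-- `S` is a total dominating set of `G`: every vertex is adjacent to a vertex of `S`. -/
def IsTotalDominatingSet {V : Type*} (G : SimpleGraph V) (S : Finset V) : Prop :=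
  ∀ v : V, ∃ u ∈ S, G.Adj v u

/-- The domination number of `G`. -/
noncomputable def dominationNumber {V : Type*} (G : SimpleGraph V) : ℕ :=
  sInf {n : ℕ | ∃ S : Finset V, IsDominatingSet G S ∧ S.card = n}

/-- The total domination number of `G`. -/
noncomputable def totalDominationNumber {V : Type*} (G : SimpleGraph V) : ℕ :=
  sInf {n : ℕ | ∃ S : Finset V, IsTotalDominatingSet G S ∧ S.card = n}

/-- The `n`-dimensional hypercube: vertices are binary strings of length `n`,
two vertices are adjacent iff they differ in exactly one coordinate. -/
def hypercube (n : ℕ) : SimpleGraph (Fin n → Bool) where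
  Adj x y := hammingDist x y = 1
  symm := ⟨fun x y h => by simpa [hammingDist_comm] using h⟩
  loopless := ⟨fun x h => by simp [hammingDist_self] at h⟩

open Finset

namespace HypDom

lemma addself {M : Type*} [AddCommGroup M] [Module (ZMod 2) M] (x : M) : x + x = 0 := by
  rw [← two_smul (ZMod 2) x, show (2 : ZMod 2) = 0 from rfl, zero_smul]

def toZ : Bool ≃ ZMod 2 where
  toFun b := cond b 1 0
  invFun z := decide (z = 1)
  left_inv b := by cases b <;> rfl
  right_inv z := by revert z; decide

variable (k : ℕ)

def f (i : Fin (2 ^ k - 1)) : Fin k → ZMod 2 :=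
  fun j => if Nat.testBit ((i : ℕ) + 1) (j : ℕ) then 1 else 0

lemma i_succ_lt (i : Fin (2 ^ k - 1)) : (i : ℕ) + 1 < 2 ^ k := by
  have h := i.2
  have : 1 ≤ 2 ^ k := Nat.one_le_two_pow
  omega

lemma f_testBit_eq {i i' : Fin (2 ^ k - 1)} (h : f k i = f k i') (j : ℕ) :
    Nat.testBit ((i : ℕ) + 1) j = Nat.testBit ((i' : ℕ) + 1) j := by
  by_cases hj : j < k
  · have h2 := congrFun h ⟨j, hj⟩
    simp only [f] at h2
    split_ifs at h2 with h3 h4 <;> simp_all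
  · have hle : 2 ^ k ≤ 2 ^ j := Nat.pow_le_pow_right (by norm_num) (le_of_not_gt hj)
    rw [Nat.testBit_eq_false_of_lt (lt_of_lt_of_le (i_succ_lt k i) hle),
      Nat.testBit_eq_false_of_lt (lt_of_lt_of_le (i_succ_lt k i') hle)]

lemma f_inj : Function.Injective (f k) := by
  intro i i' h
  have := Nat.eq_of_testBit_eq (f_testBit_eq k h)
  exact Fin.ext (by omega)

lemma f_ne_zero (i : Fin (2 ^ k - 1)) : f k i ≠ 0 := by
  intro h
  have : ((i : ℕ) + 1) = 0 := by
    apply Nat.eq_of_testBit_eq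
    intro j
    rw [Nat.zero_testBit]
    by_cases hj : j < k
    · have h2 := congrFun h ⟨j, hj⟩
      simp only [f, Pi.zero_apply] at h2
      split_ifs at h2 with h3
      · exact absurd h2 one_ne_zero
      · simpa using h3
    · exact Nat.testBit_eq_false_of_lt (lt_of_lt_of_le (i_succ_lt k i)
        (Nat.pow_le_pow_right (by norm_num) (le_of_not_gt hj)))
  omega

lemma f_surj {s : Fin k → ZMod 2} (hs : s ≠ 0) : ∃ i, f k i = s := by
  classical
  have hcard_im : (univ.image (f k)).card = 2 ^ k - 1 := by
    rw [Finset.card_image_of_injective _ (f_inj k), card_univ, Fintype.card_fin]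
  have hsub : univ.image (f k) ⊆ univ.erase (0 : Fin k → ZMod 2) := by
    intro t ht
    simp only [mem_image] at ht
    obtain ⟨i, _, rfl⟩ := ht
    exact Finset.mem_erase.mpr ⟨f_ne_zero k i, mem_univ _⟩
  have hcard_er : (univ.erase (0 : Fin k → ZMod 2)).card = 2 ^ k - 1 := by
    rw [Finset.card_erase_of_mem (mem_univ _), card_univ]
    congr 1
    simp [Fintype.card_fun]
  have heq := Finset.eq_of_subset_of_card_le hsub (by rw [hcard_er, hcard_im])
  have : s ∈ univ.image (f k) := by
    rw [heq]
    exact Finset.mem_erase.mpr ⟨hs, mem_univ _⟩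
  simpa using this

def sig : (Fin (2 ^ k - 1) → ZMod 2) →ₗ[ZMod 2] (Fin k → ZMod 2) where
  toFun x := ∑ i, x i • f k i
  map_add' x y := by simp [add_smul, Finset.sum_add_distrib]
  map_smul' c x := by simp [Finset.smul_sum, smul_smul]

lemma sig_apply (x : Fin (2 ^ k - 1) → ZMod 2) : sig k x = ∑ i, x i • f k i := rfl

lemma sig_single (i : Fin (2 ^ k - 1)) : sig k (Pi.single i 1) = f k i := by
  rw [sig_apply]
  rw [Finset.sum_eq_single i]
  · simp
  · intro b _ hb
    simp [Pi.single_apply, hb]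
  · simp

lemma sig_surj : Function.Surjective (sig k) := by
  intro s
  by_cases hs : s = 0
  · exact ⟨0, by simp [hs]⟩
  · obtain ⟨i, hi⟩ := f_surj k hs
    exact ⟨Pi.single i 1, by rw [sig_single, hi]⟩

lemma card_ker : Nat.card (LinearMap.ker (sig k)) = 2 ^ (2 ^ k - 1 - k) := by
  have hsur : LinearMap.range (sig k) = ⊤ := LinearMap.range_eq_top.mpr (sig_surj k)
  have h1 := LinearMap.finrank_range_add_finrank_ker (sig k)
  rw [hsur, finrank_top] at h1
  have h2 : Module.finrank (ZMod 2) (Fin k → ZMod 2) = k := by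
    simp [Module.finrank_pi]
  have h3 : Module.finrank (ZMod 2) (Fin (2 ^ k - 1) → ZMod 2) = 2 ^ k - 1 := by
    simp [Module.finrank_pi]
  rw [h2, h3] at h1
  haveI : Fintype ↥(LinearMap.ker (sig k)) := Fintype.ofFinite _
  have hfr : Module.finrank (ZMod 2) (LinearMap.ker (sig k)) = 2 ^ k - 1 - k := by omega
  rw [Nat.card_eq_fintype_card, Module.card_eq_pow_finrank (K := ZMod 2), ZMod.card, hfr]


def e : (Fin (2 ^ k - 1) → Bool) ≃ (Fin (2 ^ k - 1) → ZMod 2) :=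
  Equiv.piCongrRight fun _ => toZ

noncomputable def C : Finset (Fin (2 ^ k - 1) → Bool) := by
  classical exact univ.filter fun x => sig k (e k x) = 0

lemma mem_C {x : Fin (2 ^ k - 1) → Bool} : x ∈ C k ↔ sig k (e k x) = 0 := by
  classical
  simp [C]

lemma card_C : (C k).card = 2 ^ (2 ^ k - 1 - k) := by
  classical
  rw [← card_ker k]
  rw [← Fintype.card_coe (C k), ← Nat.card_eq_fintype_card]
  apply Nat.card_congr
  exact (Equiv.subtypeEquivRight (fun x => mem_C k)).trans
    ((Equiv.subtypeEquiv (p := fun x => sig k (e k x) = 0) (q := fun y => sig k y = 0)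
      (e k) (fun x => Iff.rfl)).trans
      (Equiv.subtypeEquivRight (fun y => (LinearMap.mem_ker).symm)))

lemma e_update (v : Fin (2 ^ k - 1) → Bool) (j : Fin (2 ^ k - 1)) (b : Bool) :
    e k (Function.update v j b) = Function.update (e k v) j (toZ b) := by
  funext i
  by_cases h : i = j
  · subst h; simp [e, Equiv.piCongrRight]
  · simp [e, Equiv.piCongrRight, Function.update_of_ne h]

lemma e_apply (v : Fin (2 ^ k - 1) → Bool) (i : Fin (2 ^ k - 1)) :
    e k v i = toZ (v i) := rfl

lemma toZ_not_add (b : Bool) : toZ (!b) + toZ b = 1 := by cases b <;> rfl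

lemma sig_update (v : Fin (2 ^ k - 1) → Bool) (j : Fin (2 ^ k - 1)) :
    sig k (e k (Function.update v j (!v j))) = sig k (e k v) + f k j := by
  rw [e_update]
  have key : sig k (Function.update (e k v) j (toZ (!v j))) + sig k (e k v) = f k j := by
    rw [sig_apply, sig_apply, ← Finset.sum_add_distrib]
    rw [Finset.sum_eq_single j]
    · rw [Function.update_self, ← add_smul, e_apply, toZ_not_add, one_smul]
    · intro b _ hb
      rw [Function.update_of_ne hb, ← add_smul]
      have : e k v b + e k v b = 0 := addself _
      rw [this, zero_smul]
    · simp
  calc sig k (Function.update (e k v) j (toZ (!v j)))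
      = sig k (Function.update (e k v) j (toZ (!v j))) + (sig k (e k v) + sig k (e k v)) := by
        rw [addself, add_zero]
    _ = (sig k (Function.update (e k v) j (toZ (!v j))) + sig k (e k v)) + sig k (e k v) := by
        abel
    _ = sig k (e k v) + f k j := by rw [key]; exact add_comm _ _

lemma dist_update {m : ℕ} (v : Fin m → Bool) (j : Fin m) :
    hammingDist v (Function.update v j (!v j)) = 1 := by
  have h : (univ.filter fun i => v i ≠ Function.update v j (!v j) i) = {j} := by
    ext i
    by_cases h : i = j
    · subst h; simp
    · simp [Function.update_of_ne h, h]
  show (univ.filter fun i => v i ≠ Function.update v j (!v j) i).card = 1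
  rw [h, Finset.card_singleton]

lemma C_dominating : IsDominatingSet (hypercube (2 ^ k - 1)) (C k) := by
  intro v hv
  have hσ : sig k (e k v) ≠ 0 := fun h => hv ((mem_C k).mpr h)
  obtain ⟨j, hj⟩ := f_surj k hσ
  refine ⟨Function.update v j (!v j), ?_, ?_⟩
  · rw [mem_C, sig_update, hj]
    exact addself _
  · show hammingDist v (Function.update v j (!v j)) = 1
    exact dist_update v j

lemma ball_card {m : ℕ} (u : Fin m → Bool) :
    (univ.filter fun v => hammingDist v u ≤ 1).card = m + 1 := by
  classical
  have heq : (univ.filter fun v => hammingDist v u ≤ 1) =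
      insert u ((univ : Finset (Fin m)).image fun j => Function.update u j (!u j)) := by
    ext v
    constructor
    · intro hv
      have hd := (Finset.mem_filter.mp hv).2
      rcases Nat.le_one_iff_eq_zero_or_eq_one.mp hd with h0 | h1
      · exact Finset.mem_insert.mpr (Or.inl (hammingDist_eq_zero.mp h0))
      · apply Finset.mem_insert.mpr
        right
        apply Finset.mem_image.mpr
        have hcard : (univ.filter fun i => v i ≠ u i).card = 1 := h1
        obtain ⟨j, hjq⟩ := Finset.card_eq_one.mp hcard
        refine ⟨j, mem_univ j, ?_⟩
        funext i
        by_cases h : i = j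
        · subst h
          have hne : v i ≠ u i := by
            have : i ∈ univ.filter fun i => v i ≠ u i := by rw [hjq]; simp
            simpa using this
          rw [Function.update_self]
          cases hui : u i <;> cases hvi : v i <;> simp_all
        · have hvu : v i = u i := by
            by_contra hne
            have : i ∈ univ.filter fun i => v i ≠ u i := by simp [hne]
            rw [hjq] at this
            simp at this
            exact h this
          rw [Function.update_of_ne h]
          exact hvu.symm
    · intro hv
      apply Finset.mem_filter.mpr
      refine ⟨mem_univ _, ?_⟩
      rcases Finset.mem_insert.mp hv with rfl | him
      · simp
      · obtain ⟨j, -, rfl⟩ := Finset.mem_image.mp him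
        exact le_of_eq (by rw [hammingDist_comm]; exact dist_update u j)
  have hinj : Function.Injective (fun j : Fin m => Function.update u j (!u j)) := by
    intro j j' hjj
    by_contra hne
    have h1 := congrFun hjj j
    simp only at h1
    rw [Function.update_self, Function.update_of_ne hne] at h1
    exact (Bool.not_ne_self (u j)) h1
  have hnotmem : u ∉ (univ : Finset (Fin m)).image fun j => Function.update u j (!u j) := by
    intro hmem
    obtain ⟨j, -, hj⟩ := Finset.mem_image.mp hmem
    have h2 := congrFun hj j
    rw [Function.update_self] at h2
    exact (Bool.not_ne_self (u j)) h2
  rw [heq, Finset.card_insert_of_notMem hnotmem,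
    Finset.card_image_of_injective _ hinj, card_univ, Fintype.card_fin]

lemma lower_bound (S : Finset (Fin (2 ^ k - 1) → Bool))
    (hS : IsDominatingSet (hypercube (2 ^ k - 1)) S) :
    2 ^ (2 ^ k - 1 - k) ≤ S.card := by
  classical
  have hk2 : k < 2 ^ k := Nat.lt_two_pow_self
  have hcover : (univ : Finset (Fin (2 ^ k - 1) → Bool)) ⊆
      S.biUnion fun u => univ.filter fun v => hammingDist v u ≤ 1 := by
    intro v _
    rw [Finset.mem_biUnion]
    by_cases hv : v ∈ S
    · exact ⟨v, hv, by simp⟩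
    · obtain ⟨u, hu, hadj⟩ := hS v hv
      exact ⟨u, hu, by simp [mem_filter]; exact le_of_eq hadj⟩
  have h1 : 2 ^ (2 ^ k - 1) ≤ S.card * 2 ^ k := by
    calc 2 ^ (2 ^ k - 1) = (univ : Finset (Fin (2 ^ k - 1) → Bool)).card := by
          rw [card_univ]; simp
      _ ≤ (S.biUnion fun u => univ.filter fun v => hammingDist v u ≤ 1).card :=
          Finset.card_le_card hcover
      _ ≤ ∑ u ∈ S, (univ.filter fun v => hammingDist v u ≤ 1).card :=
          Finset.card_biUnion_le
      _ = S.card * 2 ^ k := by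
          rw [Finset.sum_congr rfl fun u _ => ball_card u, Finset.sum_const, smul_eq_mul]
          congr 1
          omega
  have h2 : 2 ^ (2 ^ k - 1) = 2 ^ (2 ^ k - 1 - k) * 2 ^ k := by
    rw [← pow_add]
    congr 1
    omega
  rw [h2] at h1
  exact Nat.le_of_mul_le_mul_right h1 (Nat.pow_pos (by norm_num))

end HypDom

/-- For every `k ≥ 1`, `γ(Q_{2^k - 1}) = 2^(2^k - k - 1)`. -/
theorem domination_hypercube_pow_sub_one (k : ℕ) (hk : 1 ≤ k) :
    dominationNumber (hypercube (2 ^ k - 1)) = 2 ^ (2 ^ k - k - 1) := by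
  have harith : 2 ^ k - 1 - k = 2 ^ k - k - 1 := by omega
  have hmem : 2 ^ (2 ^ k - k - 1) ∈
      {n : ℕ | ∃ S : Finset (Fin (2 ^ k - 1) → Bool),
        IsDominatingSet (hypercube (2 ^ k - 1)) S ∧ S.card = n} :=
    ⟨HypDom.C k, HypDom.C_dominating k, by rw [HypDom.card_C, harith]⟩
  apply le_antisymm
  · exact Nat.sInf_le hmem
  · apply le_csInf ⟨_, hmem⟩
    rintro n ⟨S, hS, rfl⟩
    rw [← harith]
    exact HypDom.lower_bound k S hS
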